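/- For all n, twice the number of involutions in the demihyperoctahedral group D_n minus the number of involutions in the hyperoctahedral group B_n equals 0 if n is odd and equals n!/(n/2)! (equivalently 2^{n/2}·(n−1)!!) if n is even. Consequently i_n^D ≤ i_n^B ≤ 2·i_n^D. -/

import Mathlib

/-- Negation on `{±1,…,±n}`, modelled as `Fin n × ZMod 2` with `(i,s) ↦ (i,s+1)`. -/
def negPerm (n : ℕ) : Equiv.Perm (Fin n × ZMod 2) :=
  Equiv.prodCongr (Equiv.refl (Fin n)) (Equiv.addLeft (1 : ZMod 2))

/-- The hyperoctahedral group `B_n` of signed permutations: permutations of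
`{±1,…,±n}` commuting with negation. -/
def hyperoctahedral (n : ℕ) : Subgroup (Equiv.Perm (Fin n × ZMod 2)) :=
  Subgroup.centralizer {negPerm n}

/-- The number of involutions `i_n^B` in `B_n`. -/
noncomputable def iB (n : ℕ) : ℕ :=
  Nat.card {x : Equiv.Perm (Fin n × ZMod 2) // x ∈ hyperoctahedral n ∧ x ^ 2 = 1}


/-- The number of sign changes of a signed permutation `x`. -/
def negCount (n : ℕ) (x : Equiv.Perm (Fin n × ZMod 2)) : ℕ :=
  (Finset.univ.filter (fun i : Fin n => (x (i, (0 : ZMod 2))).2 = 1)).card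

/-- The number of involutions `i_n^D` in the demihyperoctahedral group `D_n`,
the index-2 subgroup of `B_n` of elements with an even number of sign changes. -/
noncomputable def iD (n : ℕ) : ℕ :=
  Nat.card {x : Equiv.Perm (Fin n × ZMod 2) //
    x ∈ hyperoctahedral n ∧ x ^ 2 = 1 ∧ Even (negCount n x)}

open Equiv Finset Function

variable {α : Type} [Fintype α] [DecidableEq α]

/-- parity of a sign vector -/
def par (ε : α → ZMod 2) : ZMod 2 := ∑ i, ε i

lemma even_card_iff_par (ε : α → ZMod 2) :
    Even (univ.filter (fun i => ε i = 1)).card ↔ par ε = 0 := by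
  have h1 : par ε = ((univ.filter (fun i => ε i = 1)).card : ZMod 2) := by
    rw [par]
    have : ∀ x : ZMod 2, x = if x = 1 then 1 else 0 := by decide
    rw [Finset.sum_congr rfl (fun i _ => this (ε i))]
    simp [Finset.sum_boole]
  rw [h1, ZMod.natCast_eq_zero_iff, Nat.even_iff, Nat.dvd_iff_mod_eq_zero]

lemma par_update (ε : α → ZMod 2) (i₀ : α) :
    par (Function.update ε i₀ (ε i₀ + 1)) = par ε + 1 := by
  rw [par, par, Finset.sum_update_of_mem (Finset.mem_univ i₀),
    ← Finset.add_sum_erase _ ε (Finset.mem_univ i₀), Finset.sdiff_singleton_eq_erase]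
  ring

set_option linter.unusedSectionVars false

/-- compatibility of sign vector with the permutation -/
def compat (σ : Perm α) (ε : α → ZMod 2) : Prop := ∀ i, ε (σ i) = ε i

instance (σ : Perm α) : DecidablePred (compat σ) := fun ε => by unfold compat; infer_instance

lemma par_eq_zero_of_fpf {σ : Perm α} (hσ : ∀ x, σ (σ x) = x) (hf : ∀ i, σ i ≠ i)
    {ε : α → ZMod 2} (hc : compat σ ε) : par ε = 0 := by
  refine Finset.sum_ninvolution σ (fun i => ?_) (fun i _ => hf i) (fun i => Finset.mem_univ _) hσ
  rw [hc i]
  exact (by decide : ∀ x : ZMod 2, x + x = 0) _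

/-- toggle the sign at one coordinate -/
def tog (i₀ : α) (ε : α → ZMod 2) : α → ZMod 2 := Function.update ε i₀ (ε i₀ + 1)

lemma tog_tog (i₀ : α) (ε : α → ZMod 2) : tog i₀ (tog i₀ ε) = ε := by
  have h2 : ∀ x : ZMod 2, x + 1 + 1 = x := by decide
  simp only [tog, Function.update_idem, Function.update_self, h2, Function.update_eq_self]

lemma par_tog (i₀ : α) (ε : α → ZMod 2) : par (tog i₀ ε) = par ε + 1 := par_update ε i₀

lemma compat_tog {σ : Perm α} (hσσ : ∀ x, σ (σ x) = x) {i₀ : α} (hi₀ : σ i₀ = i₀)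
    {ε : α → ZMod 2} (hc : compat σ ε) : compat σ (tog i₀ ε) := by
  intro i
  by_cases hi : i = i₀
  · subst hi; rw [hi₀]
  · have hσi : σ i ≠ i₀ := fun h => hi (by rw [← hσσ i, h, hi₀])
    rw [tog, Function.update_of_ne hσi, Function.update_of_ne hi]
    exact hc i

lemma card_compat_split (σ : Perm α) (hσ : σ ^ 2 = 1) :
    2 * Nat.card {ε : α → ZMod 2 // compat σ ε ∧ Even (univ.filter (fun i => ε i = 1)).card} =
      Nat.card {ε : α → ZMod 2 // compat σ ε} +
      Nat.card {ε : α → ZMod 2 // (∀ i, σ i ≠ i) ∧ compat σ ε} := by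
  have hσσ : ∀ x, σ (σ x) = x := fun x => by
    have := Equiv.ext_iff.1 hσ x
    simpa [pow_two, Equiv.Perm.mul_apply] using this
  have e0 : {ε : α → ZMod 2 // compat σ ε ∧ Even (univ.filter (fun i => ε i = 1)).card} ≃
      {ε : α → ZMod 2 // compat σ ε ∧ par ε = 0} :=
    Equiv.subtypeEquivRight (fun ε => by rw [even_card_iff_par])
  rw [Nat.card_congr e0]
  by_cases hf : ∀ i, σ i ≠ i
  · have e1 : {ε : α → ZMod 2 // compat σ ε ∧ par ε = 0} ≃ {ε : α → ZMod 2 // compat σ ε} :=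
      Equiv.subtypeEquivRight (fun ε =>
        ⟨fun h => h.1, fun h => ⟨h, par_eq_zero_of_fpf hσσ hf h⟩⟩)
    have e2 : {ε : α → ZMod 2 // (∀ i, σ i ≠ i) ∧ compat σ ε} ≃ {ε : α → ZMod 2 // compat σ ε} :=
      Equiv.subtypeEquivRight (fun ε => ⟨And.right, fun h => ⟨hf, h⟩⟩)
    rw [Nat.card_congr e1, Nat.card_congr e2]
    ring
  · push_neg at hf
    obtain ⟨i₀, hi₀⟩ := hf
    haveI h3 : IsEmpty {ε : α → ZMod 2 // (∀ i, σ i ≠ i) ∧ compat σ ε} :=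
      ⟨fun ⟨ε, h⟩ => h.1 i₀ hi₀⟩
    rw [Nat.card_of_isEmpty (α := {ε : α → ZMod 2 // (∀ i, σ i ≠ i) ∧ compat σ ε}), add_zero]
    have key : ∀ x : ZMod 2, x ≠ 0 → x + 1 = 0 := by decide
    have eqv : {ε : α → ZMod 2 // compat σ ε ∧ par ε = 0} ≃
        {ε : α → ZMod 2 // compat σ ε ∧ ¬ par ε = 0} :=
      { toFun := fun ε => ⟨tog i₀ ε.1, compat_tog hσσ hi₀ ε.2.1, by
          rw [par_tog, ε.2.2]; decide⟩
        invFun := fun ε => ⟨tog i₀ ε.1, compat_tog hσσ hi₀ ε.2.1, by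
          rw [par_tog, key _ ε.2.2]⟩
        left_inv := fun ε => Subtype.ext (tog_tog i₀ ε.1)
        right_inv := fun ε => Subtype.ext (tog_tog i₀ ε.1) }
    have hsplit : Nat.card {ε : α → ZMod 2 // compat σ ε} =
        Nat.card {ε : α → ZMod 2 // compat σ ε ∧ par ε = 0} +
        Nat.card {ε : α → ZMod 2 // compat σ ε ∧ ¬ par ε = 0} := by
      rw [Nat.card_eq_fintype_card, Nat.card_eq_fintype_card, Nat.card_eq_fintype_card,
        Fintype.card_subtype, Fintype.card_subtype, Fintype.card_subtype,
        ← Finset.filter_filter, ← Finset.filter_filter,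
        Finset.card_filter_add_card_filter_not]
    rw [hsplit, Nat.card_congr eqv]
    ring

/-- split a pair-subtype as a sigma type over the permutation component -/
def sigmaFiber (P : Perm α → Prop) (Q : Perm α → (α → ZMod 2) → Prop) :
    {p : Perm α × (α → ZMod 2) // P p.1 ∧ Q p.1 p.2} ≃
      Σ σ : {σ : Perm α // P σ}, {ε : α → ZMod 2 // Q σ.1 ε} where
  toFun p := ⟨⟨p.1.1, p.2.1⟩, ⟨p.1.2, p.2.2⟩⟩
  invFun s := ⟨(s.1.1, s.2.1), s.1.2, s.2.2⟩
  left_inv p := rfl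
  right_inv s := rfl

lemma main_pairs_identity :
    2 * Nat.card {p : Perm α × (α → ZMod 2) //
        p.1 ^ 2 = 1 ∧ compat p.1 p.2 ∧ Even (univ.filter (fun i => p.2 i = 1)).card} =
      Nat.card {p : Perm α × (α → ZMod 2) // p.1 ^ 2 = 1 ∧ compat p.1 p.2} +
      Nat.card {p : Perm α × (α → ZMod 2) //
        p.1 ^ 2 = 1 ∧ (∀ i, p.1 i ≠ i) ∧ compat p.1 p.2} := by
  rw [Nat.card_congr (sigmaFiber (fun σ => σ ^ 2 = 1)
        (fun σ ε => compat σ ε ∧ Even (univ.filter (fun i => ε i = 1)).card)),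
      Nat.card_congr (sigmaFiber (fun σ => σ ^ 2 = 1) (fun σ ε => compat σ ε)),
      Nat.card_congr (sigmaFiber (fun σ => σ ^ 2 = 1)
        (fun σ ε => (∀ i, σ i ≠ i) ∧ compat σ ε))]
  rw [Nat.card_eq_fintype_card, Nat.card_eq_fintype_card, Nat.card_eq_fintype_card,
    Fintype.card_sigma, Fintype.card_sigma, Fintype.card_sigma, Finset.mul_sum,
    ← Finset.sum_add_distrib]
  refine Finset.sum_congr rfl (fun σ _ => ?_)
  rw [← Nat.card_eq_fintype_card, ← Nat.card_eq_fintype_card, ← Nat.card_eq_fintype_card]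
  exact card_compat_split σ.1 σ.2

/-! ### The wreath-product coordinates for the hyperoctahedral group -/

/-- build a signed permutation from a permutation and a sign vector -/
def wreath {n : ℕ} (p : Perm (Fin n) × (Fin n → ZMod 2)) : Perm (Fin n × ZMod 2) :=
  Equiv.prodShear p.1 (fun i => Equiv.addLeft (p.2 i))

lemma wreath_apply {n : ℕ} (p : Perm (Fin n) × (Fin n → ZMod 2)) (i : Fin n) (s : ZMod 2) :
    wreath p (i, s) = (p.1 i, p.2 i + s) := rfl

lemma negPerm_apply {n : ℕ} (i : Fin n) (s : ZMod 2) : negPerm n (i, s) = (i, 1 + s) := rfl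

lemma wreath_mem {n : ℕ} (p : Perm (Fin n) × (Fin n → ZMod 2)) :
    wreath p ∈ hyperoctahedral n := by
  rw [hyperoctahedral, Subgroup.mem_centralizer_iff]
  rintro g hg
  rw [Set.mem_singleton_iff] at hg
  subst hg
  refine Equiv.ext fun z => ?_
  obtain ⟨i, s⟩ := z
  show negPerm n (wreath p (i, s)) = wreath p (negPerm n (i, s))
  rw [wreath_apply, negPerm_apply, negPerm_apply, wreath_apply]
  exact Prod.ext rfl (by ring)

lemma wreath_injective {n : ℕ} : Function.Injective (wreath (n := n)) := by
  intro p q h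
  have h0 : ∀ i : Fin n, wreath p (i, 0) = wreath q (i, 0) := fun i => by rw [h]
  simp only [wreath_apply, add_zero, Prod.mk.injEq] at h0
  refine Prod.ext (Equiv.ext fun i => (h0 i).1) (funext fun i => (h0 i).2)

lemma zmod2_add_eq_zero_iff : ∀ a b : ZMod 2, a + b = 0 ↔ a = b := by decide

lemma wreath_sq {n : ℕ} (p : Perm (Fin n) × (Fin n → ZMod 2)) :
    wreath p ^ 2 = 1 ↔ (p.1 ^ 2 = 1 ∧ compat p.1 p.2) := by
  constructor
  · intro h
    have h' : ∀ i : Fin n, wreath p (wreath p (i, 0)) = (i, 0) := fun i => by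
      have := Equiv.ext_iff.1 h (i, 0)
      simpa [pow_two, Equiv.Perm.mul_apply] using this
    simp only [wreath_apply, add_zero, Prod.mk.injEq] at h'
    constructor
    · refine Equiv.ext fun i => ?_
      simp only [pow_two, Equiv.Perm.mul_apply, Perm.coe_one, id_eq]
      exact (h' i).1
    · intro i
      exact (zmod2_add_eq_zero_iff _ _).1 (h' i).2
  · rintro ⟨h1, h2⟩
    have h1' : ∀ i, p.1 (p.1 i) = i := fun i => by
      have := Equiv.ext_iff.1 h1 i
      simpa [pow_two, Equiv.Perm.mul_apply] using this
    refine Equiv.ext fun z => ?_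
    obtain ⟨i, s⟩ := z
    simp only [pow_two, Equiv.Perm.mul_apply, Perm.coe_one, id_eq]
    rw [wreath_apply, wreath_apply, h1' i, h2 i]
    have h3 : ∀ a s : ZMod 2, a + (a + s) = s := by decide
    rw [h3]

lemma wreath_negCount {n : ℕ} (p : Perm (Fin n) × (Fin n → ZMod 2)) :
    negCount n (wreath p) = (univ.filter (fun i => p.2 i = 1)).card := by
  unfold negCount
  congr 1
  refine Finset.filter_congr (fun i _ => ?_)
  rw [wreath_apply, add_zero]

lemma wreath_surj {n : ℕ} (x : Perm (Fin n × ZMod 2)) (hmem : x ∈ hyperoctahedral n)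
    (hsq : x ^ 2 = 1) : ∃ p, wreath p = x := by
  have hcomm : ∀ z, negPerm n (x z) = x (negPerm n z) := by
    rw [hyperoctahedral, Subgroup.mem_centralizer_iff] at hmem
    have := hmem (negPerm n) (Set.mem_singleton _)
    intro z
    exact (Equiv.ext_iff.1 this z).symm ▸ (by
      have h := Equiv.ext_iff.1 this z
      simpa [Equiv.Perm.mul_apply] using h)
  have hxx : ∀ z, x (x z) = z := fun z => by
    have := Equiv.ext_iff.1 hsq z
    simpa [pow_two, Equiv.Perm.mul_apply] using this
  have hx1 : ∀ (i : Fin n) (s : ZMod 2), x (i, s) = ((x (i, 0)).1, (x (i, 0)).2 + s) := by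
    intro i s
    have hs : s = 0 ∨ s = 1 := by revert s; decide
    rcases hs with hs | hs <;> subst hs
    · simp
    · have e1 : ((i : Fin n), (1 : ZMod 2)) = negPerm n (i, 0) := by
        rw [negPerm_apply, add_zero]
      rw [e1, ← hcomm, negPerm_apply]
      rw [Prod.ext_iff]
      constructor
      · rfl
      · show 1 + (x (i,0)).2 = (x (i, 0)).2 + 1
        ring
  have hinv : Function.Involutive (fun i : Fin n => (x (i, 0)).1) := by
    intro i
    have h2 := hxx (i, 0)
    rw [show x (i, 0) = ((x (i,0)).1, (x (i,0)).2) from rfl, hx1] at h2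
    exact congrArg Prod.fst h2
  refine ⟨(hinv.toPerm _, fun i => (x (i, 0)).2), ?_⟩
  refine Equiv.ext fun z => ?_
  obtain ⟨i, s⟩ := z
  rw [wreath_apply, hx1 i s]
  rfl

/-- transport `iB` to wreath coordinates -/
lemma iB_eq (n : ℕ) : iB n =
    Nat.card {p : Perm (Fin n) × (Fin n → ZMod 2) // p.1 ^ 2 = 1 ∧ compat p.1 p.2} := by
  have e : {p : Perm (Fin n) × (Fin n → ZMod 2) // p.1 ^ 2 = 1 ∧ compat p.1 p.2} ≃
      {x : Perm (Fin n × ZMod 2) // x ∈ hyperoctahedral n ∧ x ^ 2 = 1} := by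
    refine Equiv.ofBijective
      (fun p => ⟨wreath p.1, wreath_mem p.1, (wreath_sq p.1).2 p.2⟩) ⟨?_, ?_⟩
    · intro p q h
      exact Subtype.ext (wreath_injective (congrArg Subtype.val h))
    · rintro ⟨x, hmem, hsq⟩
      obtain ⟨p, hp⟩ := wreath_surj x hmem hsq
      exact ⟨⟨p, (wreath_sq p).1 (hp ▸ hsq)⟩, Subtype.ext hp⟩
  exact (Nat.card_congr e.symm : _)

/-- transport `iD` to wreath coordinates -/
lemma iD_eq (n : ℕ) : iD n =
    Nat.card {p : Perm (Fin n) × (Fin n → ZMod 2) //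
      p.1 ^ 2 = 1 ∧ compat p.1 p.2 ∧ Even (univ.filter (fun i => p.2 i = 1)).card} := by
  have e : {p : Perm (Fin n) × (Fin n → ZMod 2) //
        p.1 ^ 2 = 1 ∧ compat p.1 p.2 ∧ Even (univ.filter (fun i => p.2 i = 1)).card} ≃
      {x : Perm (Fin n × ZMod 2) //
        x ∈ hyperoctahedral n ∧ x ^ 2 = 1 ∧ Even (negCount n x)} := by
    refine Equiv.ofBijective (fun p => ⟨wreath p.1, wreath_mem p.1,
      (wreath_sq p.1).2 ⟨p.2.1, p.2.2.1⟩, by rw [wreath_negCount]; exact p.2.2.2⟩) ⟨?_, ?_⟩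
    · intro p q h
      exact Subtype.ext (wreath_injective (congrArg Subtype.val h))
    · rintro ⟨x, hmem, hsq, hev⟩
      obtain ⟨p, hp⟩ := wreath_surj x hmem hsq
      have hc := (wreath_sq p).1 (hp ▸ hsq)
      refine ⟨⟨p, hc.1, hc.2, ?_⟩, Subtype.ext hp⟩
      rw [← wreath_negCount, hp]
      exact hev
  exact (Nat.card_congr e.symm : _)

/-! ### The count of fixed-point-free signed involutions -/

/-- `n!/(n/2)!` for even `n`, `0` for odd `n`, in double-factorial form -/
def fcnt (n : ℕ) : ℕ := if Even n then 2 ^ (n / 2) * Nat.doubleFactorial (n - 1) else 0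

lemma fcnt_zero : fcnt 0 = 1 := by simp [fcnt]

lemma fcnt_one : fcnt 1 = 0 := by simp [fcnt]

lemma fcnt_step (m : ℕ) : fcnt (m + 1) = m * (2 * fcnt (m - 1)) := by
  rcases m with _ | k
  · simp [fcnt]
  · show fcnt (k + 2) = (k + 1) * (2 * fcnt k)
    by_cases h : Even k
    · have h2 : Even (k + 2) := by rw [Nat.even_iff] at h ⊢; omega
      rw [fcnt, fcnt, if_pos h2, if_pos h]
      have hdiv : (k + 2) / 2 = k / 2 + 1 := by omega
      rcases Nat.eq_zero_or_pos k with rfl | hkpos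
      · decide
      · have hsub : k + 2 - 1 = (k - 1) + 2 := by omega
        rw [hdiv, hsub, Nat.doubleFactorial_add_two]
        have hk1 : k - 1 + 2 = k + 1 := by omega
        rw [hk1]
        ring
    · have h2 : ¬ Even (k + 2) := by rw [Nat.even_iff] at h ⊢; omega
      rw [fcnt, fcnt, if_neg h2, if_neg h]
      ring

lemma fcnt_eq_fact_div (n : ℕ) (hn : Even n) :
    fcnt n = Nat.factorial n / Nat.factorial (n / 2) := by
  obtain ⟨k, rfl⟩ := hn
  have hk : k + k = 2 * k := by ring
  rw [hk]
  have h2 : (2 * k) / 2 = k := by omega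
  rw [fcnt, if_pos (by exact ⟨k, by ring⟩), h2]
  rcases Nat.eq_zero_or_pos k with rfl | hkpos
  · decide
  · have hfact : Nat.factorial (2 * k) =
        (2 ^ k * Nat.factorial k) * Nat.doubleFactorial (2 * k - 1) := by
      have h1 : 2 * k = (2 * k - 1) + 1 := by omega
      rw [h1, Nat.factorial_eq_mul_doubleFactorial, ← h1, Nat.doubleFactorial_two_mul]
    rw [hfact]
    rw [show (2 ^ k * Nat.factorial k) * Nat.doubleFactorial (2 * k - 1) =
        (2 ^ k * Nat.doubleFactorial (2 * k - 1)) * Nat.factorial k by ring]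
    rw [Nat.mul_div_cancel _ (Nat.factorial_pos k)]

lemma sq_one_iff {γ : Type} (σ : Perm γ) : σ ^ 2 = 1 ↔ ∀ x, σ (σ x) = x := by
  rw [pow_two]
  constructor
  · intro h x
    have := Equiv.ext_iff.1 h x
    simpa [Equiv.Perm.mul_apply] using this
  · intro h
    exact Equiv.ext fun x => by simp [Equiv.Perm.mul_apply, h x]

section Step

variable (a b : α)

/-- extend a permutation on the complement of `{a,b}` by the transposition `(a b)` -/
def extFun (σ' : Perm {x : α // x ≠ a ∧ x ≠ b}) : α → α :=
  fun x => if h : x ≠ a ∧ x ≠ b then (σ' ⟨x, h⟩ : α) else if x = a then b else a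

lemma extFun_mem {x : α} (σ' : Perm {x : α // x ≠ a ∧ x ≠ b}) (h : x ≠ a ∧ x ≠ b) :
    extFun a b σ' x = (σ' ⟨x, h⟩ : α) := dif_pos h

lemma extFun_a (σ' : Perm {x : α // x ≠ a ∧ x ≠ b}) : extFun a b σ' a = b := by
  rw [extFun, dif_neg (by simp), if_pos rfl]

lemma extFun_b (hb : b ≠ a) (σ' : Perm {x : α // x ≠ a ∧ x ≠ b}) : extFun a b σ' b = a := by
  rw [extFun, dif_neg (by simp [Ne.symm hb]), if_neg hb]

lemma extFun_invol (hb : b ≠ a) (σ' : Perm {x : α // x ≠ a ∧ x ≠ b})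
    (h2 : ∀ y, σ' (σ' y) = y) : Function.Involutive (extFun a b σ') := by
  intro x
  by_cases h : x ≠ a ∧ x ≠ b
  · rw [extFun_mem a b σ' h, extFun_mem a b σ' (σ' ⟨x, h⟩).2, Subtype.coe_eta, h2]
  · by_cases hxa : x = a
    · rw [hxa, extFun_a, extFun_b a b hb]
    · have hxb : x = b := by
        by_contra hxb
        exact h ⟨hxa, hxb⟩
      rw [hxb, extFun_b a b hb, extFun_a]

lemma restrictIff (σ : Perm α) (hσσ : ∀ x, σ (σ x) = x) (hab : σ a = b) :
    ∀ x, (x ≠ a ∧ x ≠ b) ↔ (σ x ≠ a ∧ σ x ≠ b) := by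
  intro x
  have hba : σ b = a := by rw [← hab, hσσ]
  constructor
  · rintro ⟨h1, h2⟩
    refine ⟨fun h => h2 ?_, fun h => h1 ?_⟩
    · rw [← hσσ x, h, hab]
    · rw [← hσσ x, h, hba]
  · rintro ⟨h1, h2⟩
    refine ⟨fun h => h2 ?_, fun h => h1 ?_⟩
    · rw [h, hab]
    · rw [h, hba]

/-- The key bijection: fixed-point-free signed involutions sending `a` to `b ≠ a`
correspond to a sign together with a fixed-point-free signed involution on the
complement of `{a, b}`. -/
def stepEquiv (hb : b ≠ a) :
    {p : Perm α × (α → ZMod 2) //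
       ((p.1 ^ 2 = 1 ∧ (∀ i, p.1 i ≠ i) ∧ compat p.1 p.2) ∧ p.1 a = b)} ≃
    ZMod 2 × {q : Perm {x : α // x ≠ a ∧ x ≠ b} × ({x : α // x ≠ a ∧ x ≠ b} → ZMod 2) //
       q.1 ^ 2 = 1 ∧ (∀ i, q.1 i ≠ i) ∧ compat q.1 q.2} where
  toFun p :=
    (p.1.2 a,
     ⟨(p.1.1.subtypePerm (fun x => (restrictIff a b p.1.1 ((sq_one_iff p.1.1).1 p.2.1.1) p.2.2 x).symm),
       fun x => p.1.2 x.1), by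
      obtain ⟨⟨σ, ε⟩, ⟨⟨h1, h2, h3⟩, h5⟩⟩ := p
      have hσσ := (sq_one_iff σ).1 h1
      refine ⟨(sq_one_iff _).2 fun y => Subtype.ext (hσσ y.1), fun y hy => h2 y.1
        (congrArg Subtype.val hy), fun y => h3 y.1⟩⟩)
  invFun q :=
    ⟨((extFun_invol a b hb q.2.1.1 ((sq_one_iff q.2.1.1).1 q.2.2.1)).toPerm _,
      fun x => if h : x ≠ a ∧ x ≠ b then q.2.1.2 ⟨x, h⟩ else q.1), by
      obtain ⟨c, ⟨⟨σ', ε'⟩, ⟨h1, h2, h3⟩⟩⟩ := q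
      have hσσ := (sq_one_iff σ').1 h1
      refine ⟨⟨(sq_one_iff _).2 (extFun_invol a b hb σ' hσσ), ?_, ?_⟩, ?_⟩
      · -- fixed-point-freeness
        intro x
        show extFun a b σ' x ≠ x
        by_cases h : x ≠ a ∧ x ≠ b
        · rw [extFun_mem a b σ' h]
          exact fun heq => h2 ⟨x, h⟩ (Subtype.ext heq)
        · by_cases hxa : x = a
          · rw [hxa, extFun_a]; exact hb
          · have hxb : x = b := by
              by_contra hxb
              exact h ⟨hxa, hxb⟩
            rw [hxb, extFun_b a b hb]; exact Ne.symm hb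
      · -- compatibility
        intro x
        show (if h : extFun a b σ' x ≠ a ∧ extFun a b σ' x ≠ b
            then ε' ⟨extFun a b σ' x, h⟩ else c) =
          (if h : x ≠ a ∧ x ≠ b then ε' ⟨x, h⟩ else c)
        by_cases h : x ≠ a ∧ x ≠ b
        · rw [dif_pos h]
          have hy := (σ' ⟨x, h⟩).2
          have he : extFun a b σ' x = (σ' ⟨x, h⟩ : α) := extFun_mem a b σ' h
          rw [dif_pos (he ▸ hy)]
          have hsub : (⟨extFun a b σ' x, he ▸ hy⟩ : {x : α // x ≠ a ∧ x ≠ b}) = σ' ⟨x, h⟩ :=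
            Subtype.ext he
          rw [hsub]
          exact h3 ⟨x, h⟩
        · by_cases hxa : x = a
          · rw [hxa, extFun_a, dif_neg (show ¬(b ≠ a ∧ b ≠ b) by simp),
              dif_neg (show ¬(a ≠ a ∧ a ≠ b) by simp)]
          · have hxb : x = b := by
              by_contra hxb
              exact h ⟨hxa, hxb⟩
            rw [hxb, extFun_b a b hb, dif_neg (show ¬(a ≠ a ∧ a ≠ b) by simp),
              dif_neg (show ¬(b ≠ a ∧ b ≠ b) by simp)]
      · -- sends a to b
        show extFun a b σ' a = b
        exact extFun_a a b σ'⟩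
  left_inv := by
    rintro ⟨⟨σ, ε⟩, ⟨⟨h1, h2, h3⟩, h5⟩⟩
    have hσσ := (sq_one_iff σ).1 h1
    apply Subtype.ext
    refine Prod.ext ?_ ?_
    · -- permutations agree
      refine Equiv.ext fun x => ?_
      show extFun a b _ x = σ x
      by_cases h : x ≠ a ∧ x ≠ b
      · rw [extFun_mem a b _ h]
        rfl
      · by_cases hxa : x = a
        · rw [hxa, extFun_a, h5]
        · have hxb : x = b := by
            by_contra hxb
            exact h ⟨hxa, hxb⟩
          rw [hxb, extFun_b a b hb, ← h5, hσσ]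
    · -- sign vectors agree
      funext x
      show (if h : x ≠ a ∧ x ≠ b then ε x else ε a) = ε x
      by_cases h : x ≠ a ∧ x ≠ b
      · rw [dif_pos h]
      · rw [dif_neg h]
        by_cases hxa : x = a
        · rw [hxa]
        · have hxb : x = b := by
            by_contra hxb
            exact h ⟨hxa, hxb⟩
          rw [hxb, ← h5]
          exact (h3 a).symm
  right_inv := by
    rintro ⟨c, ⟨⟨σ', ε'⟩, ⟨h1, h2, h3⟩⟩⟩
    refine Prod.ext ?_ ?_
    · show (if h : a ≠ a ∧ a ≠ b then ε' ⟨a, h⟩ else c) = c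
      rw [dif_neg (by simp)]
    · apply Subtype.ext
      refine Prod.ext ?_ ?_
      · refine Equiv.ext fun y => ?_
        apply Subtype.ext
        show extFun a b σ' y.1 = (σ' y : α)
        rw [extFun_mem a b σ' y.2, Subtype.coe_eta]
      · funext y
        show (if h : (y : α) ≠ a ∧ (y : α) ≠ b then ε' ⟨y.1, h⟩ else c) = ε' y
        rw [dif_pos y.2, Subtype.coe_eta]

end Step

lemma KP_card : ∀ (n : ℕ) (α : Type) [Fintype α] [DecidableEq α], Fintype.card α = n →
    Nat.card {p : Perm α × (α → ZMod 2) //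
      p.1 ^ 2 = 1 ∧ (∀ i, p.1 i ≠ i) ∧ compat p.1 p.2} = fcnt n := by
  intro n
  induction n using Nat.strong_induction_on with
  | _ n ih =>
    intro α _ _ hcard
    rcases n with _ | m
    · -- the empty case
      haveI : IsEmpty α := Fintype.card_eq_zero_iff.1 hcard
      haveI hss : Subsingleton {p : Perm α × (α → ZMod 2) //
          p.1 ^ 2 = 1 ∧ (∀ i, p.1 i ≠ i) ∧ compat p.1 p.2} :=
        ⟨fun p q => Subtype.ext (Prod.ext (Equiv.ext fun i => isEmptyElim i)
          (funext fun i => isEmptyElim i))⟩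
      haveI hne : Nonempty {p : Perm α × (α → ZMod 2) //
          p.1 ^ 2 = 1 ∧ (∀ i, p.1 i ≠ i) ∧ compat p.1 p.2} :=
        ⟨⟨(1, fun _ => 0), one_pow 2, fun i => isEmptyElim i, fun i => rfl⟩⟩
      rw [fcnt_zero]
      haveI : Unique {p : Perm α × (α → ZMod 2) //
          p.1 ^ 2 = 1 ∧ (∀ i, p.1 i ≠ i) ∧ compat p.1 p.2} :=
        uniqueOfSubsingleton hne.some
      exact Nat.card_unique
    · -- the inductive step
      have hpos : 0 < Fintype.card α := by omega
      obtain ⟨a⟩ := Fintype.card_pos_iff.1 hpos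
      rw [Nat.card_eq_fintype_card, Fintype.card_subtype]
      rw [Finset.card_eq_sum_card_fiberwise (f := fun p : Perm α × (α → ZMod 2) => p.1 a)
        (t := univ.erase a) (fun p hp => by
          rw [Finset.mem_coe, Finset.mem_filter] at hp
          exact Finset.mem_erase.2 ⟨hp.2.2.1 a, Finset.mem_univ _⟩)]
      have hterm : ∀ b ∈ univ.erase a,
          ((univ.filter (fun p : Perm α × (α → ZMod 2) =>
            p.1 ^ 2 = 1 ∧ (∀ i, p.1 i ≠ i) ∧ compat p.1 p.2)).filter
              (fun p => p.1 a = b)).card = 2 * fcnt (m - 1) := by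
        intro b hbmem
        have hb : b ≠ a := (Finset.mem_erase.1 hbmem).1
        have hcardb : Fintype.card {x : α // x ≠ a ∧ x ≠ b} = m - 1 := by
          rw [Fintype.card_subtype]
          have : univ.filter (fun x : α => x ≠ a ∧ x ≠ b) = (univ.erase b).erase a := by
            ext x
            simp only [Finset.mem_filter, Finset.mem_erase, Finset.mem_univ, and_true,
              true_and]
            try tauto
          rw [this, Finset.card_erase_of_mem (Finset.mem_erase.2 ⟨Ne.symm hb,
            Finset.mem_univ _⟩), Finset.card_erase_of_mem (Finset.mem_univ _)]
          have hu : (univ : Finset α).card = m + 1 := hcard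
          omega
        have hIH := ih (m - 1) (by omega) {x : α // x ≠ a ∧ x ≠ b} hcardb
        rw [Finset.filter_filter, ← Fintype.card_subtype, ← Nat.card_eq_fintype_card,
          Nat.card_congr (stepEquiv a b hb), Nat.card_prod, Nat.card_eq_fintype_card,
          ZMod.card 2, hIH]
      rw [Finset.sum_congr rfl hterm, Finset.sum_const,
        Finset.card_erase_of_mem (Finset.mem_univ _), smul_eq_mul]
      have hu : (univ : Finset α).card = m + 1 := hcard
      rw [hu, fcnt_step]
      simp

lemma key_identity (n : ℕ) : 2 * iD n = iB n + fcnt n := by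
  rw [iD_eq, iB_eq, main_pairs_identity]
  congr 1
  exact KP_card n (Fin n) (Fintype.card_fin n)

lemma iD_le_iB (n : ℕ) : iD n ≤ iB n := by
  rw [iD, iB]
  exact Nat.card_le_card_of_injective
    (fun x => ⟨x.1, x.2.1, x.2.2.1⟩)
    (fun x y h => Subtype.ext (congrArg (fun z : {x : Perm (Fin n × ZMod 2) //
      x ∈ hyperoctahedral n ∧ x ^ 2 = 1} => z.val) h))

/-- `2 i_n^D − i_n^B` is `0` for odd `n` and `n!/(n/2)!` (equivalently
`2^{n/2} (n−1)!!`) for even `n`; consequently `i_n^D ≤ i_n^B ≤ 2 i_n^D`. -/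
theorem two_iD_sub_iB (n : ℕ) :
    (2 * iD n = iB n +
      if Even n then Nat.factorial n / Nat.factorial (n / 2) else 0) ∧
    (¬ Even n → 2 * iD n = iB n) ∧
    (Even n → 2 * iD n - iB n = 2 ^ (n / 2) * Nat.doubleFactorial (n - 1)) ∧
    iD n ≤ iB n ∧ iB n ≤ 2 * iD n := by
  have hk := key_identity n
  refine ⟨?_, ?_, ?_, iD_le_iB n, ?_⟩
  · rw [hk]
    congr 1
    by_cases h : Even n
    · rw [if_pos h, fcnt_eq_fact_div n h]
    · rw [if_neg h, fcnt, if_neg h]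
  · intro h
    rw [hk, fcnt, if_neg h, add_zero]
  · intro h
    rw [hk, Nat.add_sub_cancel_left, fcnt, if_pos h]
  · rw [hk]
    exact Nat.le_add_right _ _
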